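/- Consider the acyclic join J = ABCDE ⋈ ABCE ⋈ ADE ⋈ AB ⋈ AE (relations named by their attribute sets). The subjoin AB ⋈ AE is not safe: there is a fully reduced database D over the schemas of J such that AB ⋈ AE computed on D contains a tuple agreeing on {A,B,E} with no tuple of the join of the remaining relations. Concretely, with values in {0,1}, take t1 assigning 1 to B and E and 0 to A,C,D, and t2 assigning 0 everywhere, populate every relation with the projections of t1 and t2; then D is fully reduced, AB ⋈ AE contains the four tuples over {A,B,E} with A=0, but the join ABCDE ⋈ ABCE ⋈ ADE contains only the two projections of t1 and t2, so the mixed tuples (A=0,B=1,E=0) and (A=0,B=0,E=1) are dangling. -/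
import Mathlib


/-- A tuple `t` agrees with tuple `u` on the attribute set `S`. -/
def Agrees {α V : Type} (S : Set α) (t u : α → V) : Prop := ∀ a ∈ S, t a = u a

/-- The output of the natural join of the relations `R i` with schemas `sch i`. -/
def JoinOut {ι α V : Type} (sch : ι → Set α) (R : ι → Set (α → V)) : Set (α → V) :=
  { t | ∀ i, ∃ u ∈ R i, Agrees (sch i) t u }

/-- The output of the join of the subfamily of relations indexed by `K`. -/
def SubJoinOut {ι α V : Type} (sch : ι → Set α) (R : ι → Set (α → V)) (K : Set ι) :
    Set (α → V) :=
  { t | ∀ i ∈ K, ∃ u ∈ R i, Agrees (sch i) t u }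

/-- A database is fully reduced if every tuple of every relation is the projection of
some tuple in the full join output. -/
def FullyReduced {ι α V : Type} (sch : ι → Set α) (R : ι → Set (α → V)) : Prop :=
  ∀ i, ∀ u ∈ R i, ∃ t ∈ JoinOut sch R, Agrees (sch i) t u

/-- The boundary attributes of the subjoin indexed by `K`: attributes occurring both in
some relation of the subjoin and in some relation outside it. -/
def Boundary {ι α : Type} (sch : ι → Set α) (K : Set ι) : Set α :=
  (⋃ i ∈ K, sch i) ∩ (⋃ i ∈ Kᶜ, sch i)

/-- `G` is a join tree (parse tree) of the join with relation schemas `sch`. -/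
def IsJoinTree {ι α : Type} (G : SimpleGraph ι) (sch : ι → Set α) : Prop :=
  G.IsTree ∧ ∀ a : α, ∀ i j : ι, a ∈ sch i → a ∈ sch j →
    ∃ p : G.Walk i j, ∀ k ∈ p.support, a ∈ sch k

/-- The node set `K` induces a connected subtree of `G`. -/
def ConnectedIn {ι : Type} (G : SimpleGraph ι) (K : Set ι) : Prop :=
  ∀ i ∈ K, ∀ j ∈ K, ∃ p : G.Walk i j, ∀ k ∈ p.support, k ∈ K

/-- For the acyclic join ABCDE ⋈ ABCE ⋈ ADE ⋈ AB ⋈ AE (attributes A..E encoded as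
0..4 : Fin 5), with the database obtained by projecting the tuples
t1 = (A=0,B=1,C=0,D=0,E=1) and t2 = all-0 onto each schema: the database is fully
reduced; the subjoin AB ⋈ AE (indices {3,4}) outputs exactly the tuples with A = 0
(four tuples over {A,B,E}); the complement join ABCDE ⋈ ABCE ⋈ ADE outputs exactly
t1 and t2; and the mixed tuples (A=0,B=1,E=0) and (A=0,B=0,E=1) of the subjoin
output are dangling: they agree on {A,B,E} with no complement-join tuple. Hence the
subjoin AB ⋈ AE is not safe. -/
theorem stmt17
    (sch : Fin 5 → Set (Fin 5))
    (hsch : sch = ![Set.univ, {0, 1, 2, 4}, {0, 3, 4}, {0, 1}, {0, 4}])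
    (t1 t2 : Fin 5 → Bool)
    (ht1 : t1 = ![false, true, false, false, true])
    (ht2 : t2 = fun _ => false)
    (R : Fin 5 → Set (Fin 5 → Bool))
    (hR : ∀ i, R i = {u | Agrees (sch i) u t1 ∨ Agrees (sch i) u t2}) :
    FullyReduced sch R ∧
    (∀ t, t ∈ SubJoinOut sch R {3, 4} ↔ t 0 = false) ∧
    (∀ t, t ∈ SubJoinOut sch R ({3, 4} : Set (Fin 5))ᶜ ↔
      ((∀ a, t a = t1 a) ∨ (∀ a, t a = t2 a))) ∧
    (![false, true, false, false, false] ∈ SubJoinOut sch R {3, 4} ∧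
      ∀ t' ∈ SubJoinOut sch R ({3, 4} : Set (Fin 5))ᶜ,
        ¬ Agrees ({0, 1, 4} : Set (Fin 5)) ![false, true, false, false, false] t') ∧
    (![false, false, false, false, true] ∈ SubJoinOut sch R {3, 4} ∧
      ∀ t' ∈ SubJoinOut sch R ({3, 4} : Set (Fin 5))ᶜ,
        ¬ Agrees ({0, 1, 4} : Set (Fin 5)) ![false, false, false, false, true] t') := by
  
  have s0 : sch 0 = Set.univ := by rw [hsch]; rfl
  have s3 : sch 3 = ({0, 1} : Set (Fin 5)) := by rw [hsch]; rfl
  have s4 : sch 4 = ({0, 4} : Set (Fin 5)) := by rw [hsch]; rfl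
  have agr_refl : ∀ (S : Set (Fin 5)) (t : Fin 5 → Bool), Agrees S t t := fun _ _ a _ => rfl
  have h1mem : ∀ i, t1 ∈ R i := fun i => by rw [hR]; exact Or.inl (agr_refl _ _)
  have h2mem : ∀ i, t2 ∈ R i := fun i => by rw [hR]; exact Or.inr (agr_refl _ _)
  have h1J : t1 ∈ JoinOut sch R := fun i => ⟨t1, h1mem i, agr_refl _ _⟩
  have h2J : t2 ∈ JoinOut sch R := fun i => ⟨t2, h2mem i, agr_refl _ _⟩
  have key3 : ∀ t : Fin 5 → Bool, t 0 = false → t ∈ R 3 := by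
    intro t h0
    rw [hR, s3]
    cases hb : t 1 with
    | false =>
      right; intro a ha
      simp only [Set.mem_insert_iff, Set.mem_singleton_iff] at ha
      rcases ha with rfl | rfl
      · rw [h0, ht2]
      · rw [hb, ht2]
    | true =>
      left; intro a ha
      simp only [Set.mem_insert_iff, Set.mem_singleton_iff] at ha
      rcases ha with rfl | rfl
      · rw [h0, ht1]; rfl
      · rw [hb, ht1]; rfl
  have key4 : ∀ t : Fin 5 → Bool, t 0 = false → t ∈ R 4 := by
    intro t h0
    rw [hR, s4]
    cases hb : t 4 with
    | false =>
      right; intro a ha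
      simp only [Set.mem_insert_iff, Set.mem_singleton_iff] at ha
      rcases ha with rfl | rfl
      · rw [h0, ht2]
      · rw [hb, ht2]
    | true =>
      left; intro a ha
      simp only [Set.mem_insert_iff, Set.mem_singleton_iff] at ha
      rcases ha with rfl | rfl
      · rw [h0, ht1]; rfl
      · rw [hb, ht1]; rfl
  have P2 : ∀ t, t ∈ SubJoinOut sch R {3, 4} ↔ t 0 = false := by
    intro t
    constructor
    · intro h
      obtain ⟨u, hu, hag⟩ := h 3 (by simp)
      rw [hR, s3] at hu
      have h0 : t 0 = u 0 := hag 0 (by rw [s3]; exact Set.mem_insert _ _)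
      rcases hu with h' | h'
      · rw [h0, h' 0 (Set.mem_insert _ _), ht1]; rfl
      · rw [h0, h' 0 (Set.mem_insert _ _), ht2]
    · intro h0 i hi
      simp only [Set.mem_insert_iff, Set.mem_singleton_iff] at hi
      rcases hi with rfl | rfl
      · exact ⟨t, key3 t h0, agr_refl _ _⟩
      · exact ⟨t, key4 t h0, agr_refl _ _⟩
  have P3 : ∀ t, t ∈ SubJoinOut sch R ({3, 4} : Set (Fin 5))ᶜ ↔
      ((∀ a, t a = t1 a) ∨ (∀ a, t a = t2 a)) := by
    intro t
    constructor
    · intro h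
      obtain ⟨u, hu, hag⟩ := h 0 (by simp)
      rw [hR, s0] at hu
      rcases hu with h' | h'
      · left; intro a
        rw [hag a (by rw [s0]; exact Set.mem_univ a), h' a (Set.mem_univ a)]
      · right; intro a
        rw [hag a (by rw [s0]; exact Set.mem_univ a), h' a (Set.mem_univ a)]
    · intro h i hi
      rcases h with h | h
      · exact ⟨t1, h1mem i, fun a _ => h a⟩
      · exact ⟨t2, h2mem i, fun a _ => h a⟩
  refine ⟨?_, P2, P3, ⟨(P2 _).mpr rfl, ?_⟩, ⟨(P2 _).mpr rfl, ?_⟩⟩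
  · intro i u hu
    rw [hR] at hu
    rcases hu with h | h
    · exact ⟨t1, h1J, fun a ha => (h a ha).symm⟩
    · exact ⟨t2, h2J, fun a ha => (h a ha).symm⟩
  · intro t' ht' hag
    rcases (P3 t').mp ht' with h | h
    · have h4 := hag 4 (by simp)
      rw [h 4, ht1] at h4
      exact absurd h4 (by decide)
    · have h1 := hag 1 (by simp)
      rw [h 1, ht2] at h1
      exact absurd h1 (by decide)
  · intro t' ht' hag
    rcases (P3 t').mp ht' with h | h
    · have h1 := hag 1 (by simp)
      rw [h 1, ht1] at h1
      exact absurd h1 (by decide)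
    · have h4 := hag 4 (by simp)
      rw [h 4, ht2] at h4
      exact absurd h4 (by decide)
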